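/- arXiv:2010.13966 — 2 statements merged into one kernel-verified Lean document; each statement's English description precedes it below -/
import Mathlib

section
/- Under assumptions (A1)-(A4), the graph satisfies the Bakry-Émery curvature-dimension condition CD(K,n) at each of the two boundary vertices, i.e., Γ₂(f,f)(i) ≥ (1/n)(Δf)²(i) + KΓ(f,f)(i) for i = 1,2 and all f ∈ ℝ^V. -/
open Finset

variable {V : Type*} [Fintype V] [DecidableEq V]

/-- The weighted graph Laplacian: `Δu(x) = (1/m x) ∑_y (u y - u x) w x y`. -/
noncomputable def glap (m : V → ℝ) (w : V → V → ℝ) (u : V → ℝ) (x : V) : ℝ :=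
  (1 / m x) * ∑ y, (u y - u x) * w x y

/-- The carré du champ operator `Γ(u,v) = (1/2)(Δ(uv) - vΔu - uΔv)`. -/
noncomputable def gGam (m : V → ℝ) (w : V → V → ℝ) (u v : V → ℝ) (x : V) : ℝ :=
  (1 / 2) * (glap m w (fun z => u z * v z) x - v x * glap m w u x - u x * glap m w v x)

/-- The iterated carré du champ `Γ₂(u,v) = (1/2)(ΔΓ(u,v) - Γ(Δu,v) - Γ(u,Δv))`. -/
noncomputable def gGam2 (m : V → ℝ) (w : V → V → ℝ) (u v : V → ℝ) (x : V) : ℝ :=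
  (1 / 2) * (glap m w (gGam m w u v) x - gGam m w (glap m w u) v x - gGam m w u (glap m w v) x)

/-- Vertex inner product `⟨u,v⟩ = ∑_x u x v x m x`. -/
noncomputable def vip (m : V → ℝ) (u v : V → ℝ) : ℝ := ∑ x, u x * v x * m x

/-- Edge (1-form) inner product of differentials:
`⟨du,dv⟩ = ∑_{{x,y}∈E} (u y - u x)(v y - v x) w x y = (1/2)∑_{x,y}`. -/
noncomputable def eip (w : V → V → ℝ) (u v : V → ℝ) : ℝ :=
  (1 / 2) * ∑ x, ∑ y, (u y - u x) * (v y - v x) * w x y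

/-- `(m,w)` is a weighted graph structure: positive vertex measure, symmetric
nonnegative edge weights, no loops. -/
def WeightedGraph (m : V → ℝ) (w : V → V → ℝ) : Prop :=
  (∀ x, 0 < m x) ∧ (∀ x y, w x y = w y x) ∧ (∀ x y, 0 ≤ w x y) ∧ (∀ x, w x x = 0)

/-- The underlying simple graph: `x ∼ y` iff `w x y > 0`. -/
def wgraph (w : V → V → ℝ) : SimpleGraph V := SimpleGraph.fromRel (fun x y => 0 < w x y)

/-- The Bakry-Émery curvature-dimension condition `CD(K,n)`. -/
def CD (m : V → ℝ) (w : V → V → ℝ) (K n : ℝ) : Prop :=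
  ∀ (f : V → ℝ) (x : V), gGam2 m w f f x ≥ (1 / n) * (glap m w f x) ^ 2 + K * gGam m w f f x

/-- `B` is a vertex boundary: nonempty, independent, and every boundary vertex is
adjacent to some interior vertex. -/
def GraphBoundary (w : V → V → ℝ) (B : Finset V) : Prop :=
  B.Nonempty ∧ (∀ x ∈ B, ∀ y ∈ B, w x y = 0) ∧ (∀ x ∈ B, ∃ y, y ∉ B ∧ 0 < w x y)

/-- `σ` is a Steklov eigenvalue: there is `u`, harmonic on the interior, with
boundary restriction nonzero, and `∂u/∂n = σ u` on `B`. -/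
def SteklovEig (m : V → ℝ) (w : V → V → ℝ) (B : Finset V) (σ : ℝ) : Prop :=
  ∃ u : V → ℝ, (∃ x ∈ B, u x ≠ 0) ∧ (∀ x, x ∉ B → glap m w u x = 0) ∧
    (∀ x ∈ B, - glap m w u x = σ * u x)

/-- `μ` is an eigenvalue of `-Δ`. -/
def LapEig (m : V → ℝ) (w : V → V → ℝ) (μ : ℝ) : Prop :=
  ∃ u : V → ℝ, u ≠ 0 ∧ ∀ x, - glap m w u x = μ * u x

/-- The edge weight of the induced graph on the interior `Ω = Bᶜ`. -/
def wRes (B : Finset V) (w : V → V → ℝ) : V → V → ℝ :=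
  fun x y => if x ∈ B ∨ y ∈ B then 0 else w x y

set_option linter.unusedSectionVars false

lemma gGam_eq (m : V → ℝ) (w : V → V → ℝ) (u v : V → ℝ) (x : V) :
    gGam m w u v x = (1 / (2 * m x)) * ∑ y, (u y - u x) * (v y - v x) * w x y := by
  simp only [gGam, glap, Finset.mul_sum]
  rw [← Finset.sum_sub_distrib, ← Finset.sum_sub_distrib, Finset.mul_sum]
  apply Finset.sum_congr rfl
  intros y _
  ring

lemma gGam_comm (m : V → ℝ) (w : V → V → ℝ) (u v : V → ℝ) (x : V) :
    gGam m w u v x = gGam m w v u x := by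
  rw [gGam_eq, gGam_eq]
  congr 1
  exact Finset.sum_congr rfl (fun y _ => by ring)

lemma sum_split (a b : V) (hab : a ≠ b) (g : V → ℝ) :
    ∑ y, g y = g a + g b + ∑ y ∈ univ \ {a, b}, g y := by
  rw [← Finset.sum_sdiff (Finset.subset_univ ({a, b} : Finset V)), Finset.sum_pair hab]
  ring

lemma arith (K n ma S T W U Q β g2 : ℝ) (hK : 0 < K) (hn : 1 < n) (hma : 0 < ma)
    (hU : U = W * β ^ 2 - 4 * β * S + 4 * T)
    (hW : W = n * K / (n - 1) * ma)
    (hCS : S ^ 2 ≤ W * T) (hQ : 0 ≤ Q)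
    (hMain : 2 * ma * g2 = (n + 2) * K / (n - 1) / 4 * (2 * T + U + Q)
      - W * T / (2 * ma) + S ^ 2 / ma) :
    g2 ≥ 1 / n * (1 / ma * S) ^ 2 + K * (1 / (2 * ma) * T) := by
  have hma' : ma ≠ 0 := ne_of_gt hma
  have hn0 : n ≠ 0 := by positivity
  have hn1 : (0:ℝ) < n - 1 := by linarith
  have hn1' : n - 1 ≠ 0 := ne_of_gt hn1
  have hK' : K ≠ 0 := ne_of_gt hK
  have h2ma : (0:ℝ) < 2 * ma := by linarith
  rw [ge_iff_le, ← mul_le_mul_iff_right₀ h2ma, hMain, hU, hW]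
  have hkey : ((n + 2) * K / (n - 1) / 4 * (2 * T + (n * K / (n - 1) * ma * β ^ 2
        - 4 * β * S + 4 * T) + Q) - n * K / (n - 1) * ma * T / (2 * ma) + S ^ 2 / ma)
      - 2 * ma * (1 / n * (1 / ma * S) ^ 2 + K * (1 / (2 * ma) * T))
      = (n + 2) * K / (n - 1) / 4 * Q
        + (n + 2) * K / (n - 1) / (4 * (n * K / (n - 1) * ma)) * (n * K / (n - 1) * ma * β - 2 * S) ^ 2
        + 4 / ((n - 1) * (n * K / (n - 1) * ma)) * K * (n * K / (n - 1) * ma * T - S ^ 2) := by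
    field_simp
    ring
  have hWpos : (0:ℝ) < n * K / (n - 1) * ma := by
    apply mul_pos (div_pos (mul_pos (by linarith) hK) hn1) hma
  have hcs2 : S ^ 2 ≤ n * K / (n - 1) * ma * T := by rw [hW] at hCS; exact hCS
  have ht1 : 0 ≤ (n + 2) * K / (n - 1) / 4 * Q := by
    apply mul_nonneg _ hQ
    have : (0:ℝ) < (n + 2) * K / (n - 1) / 4 := by
      apply div_pos (div_pos (mul_pos (by linarith) hK) hn1) (by norm_num)
    linarith
  have ht2 : 0 ≤ (n + 2) * K / (n - 1) / (4 * (n * K / (n - 1) * ma))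
      * (n * K / (n - 1) * ma * β - 2 * S) ^ 2 := by
    apply mul_nonneg _ (sq_nonneg _)
    apply le_of_lt
    apply div_pos (div_pos (mul_pos (by linarith) hK) hn1) (by linarith)
  have ht3 : 0 ≤ 4 / ((n - 1) * (n * K / (n - 1) * ma)) * K
      * (n * K / (n - 1) * ma * T - S ^ 2) := by
    apply mul_nonneg (mul_nonneg _ hK.le) (by linarith)
    apply le_of_lt
    apply div_pos (by norm_num) (mul_pos hn1 hWpos)
  linarith [hkey]

lemma key0 (m : V → ℝ) (w : V → V → ℝ) (a b : V) (hW : WeightedGraph m w)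
    (K n : ℝ) (hK : 0 < K) (hn : 1 < n) (hab : a ≠ b) (hnadj : w a b = 0)
    (hwe : ∀ x, x ≠ a → x ≠ b → w a x = w b x)
    (hDega : (1 / m a) * ∑ y, w a y = n * K / (n - 1))
    (hDb : ∀ x, x ≠ a → x ≠ b → 2 * w a x / m x = (n + 2) * K / (n - 1))
    (f : V → ℝ) (hf : f a = 0) :
    gGam2 m w f f a ≥ 1 / n * glap m w f a ^ 2 + K * gGam m w f f a := by
  obtain ⟨hm0, hsym, hge, hloop⟩ := hW
  have hma : (0:ℝ) < m a := hm0 a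
  have hma' : m a ≠ 0 := ne_of_gt hma
  have hn1 : (0:ℝ) < n - 1 := by linarith
  have hn1' : n - 1 ≠ 0 := ne_of_gt hn1
  have hmem : ∀ y ∈ univ \ ({a, b} : Finset V), y ≠ a ∧ y ≠ b := by
    intro y hy
    simp only [Finset.mem_sdiff, Finset.mem_univ, true_and, Finset.mem_insert,
      Finset.mem_singleton, not_or] at hy
    exact hy
  have hsplit : ∀ g : V → ℝ, ∑ y, g y = g a + g b + ∑ y ∈ univ \ {a, b}, g y :=
    sum_split a b hab
  -- sums over univ reduce to sums over Ω
  have hWsum : ∑ y, w a y = ∑ y ∈ univ \ ({a, b} : Finset V), w a y := by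
    rw [hsplit (fun y => w a y), hloop, hnadj]; ring
  have hSsum : ∑ y, f y * w a y = ∑ y ∈ univ \ ({a, b} : Finset V), f y * w a y := by
    rw [hsplit (fun y => f y * w a y), hloop, hnadj]; ring
  have hTsum : ∑ y, f y ^ 2 * w a y = ∑ y ∈ univ \ ({a, b} : Finset V), f y ^ 2 * w a y := by
    rw [hsplit (fun y => f y ^ 2 * w a y), hloop, hnadj]; ring
  -- Step A : laplacian at a
  have hA : glap m w f a = 1 / m a * ∑ y ∈ univ \ ({a, b} : Finset V), f y * w a y := by
    simp only [glap, hf, sub_zero]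
    rw [hSsum]
  -- Step B : Gamma at a
  have hB : gGam m w f f a = 1 / (2 * m a) * ∑ y ∈ univ \ ({a, b} : Finset V), f y ^ 2 * w a y := by
    rw [gGam_eq]
    simp only [hf, sub_zero]
    rw [show ∑ y, f y * f y * w a y = ∑ y, f y ^ 2 * w a y from
      Finset.sum_congr rfl (fun y _ => by ring), hTsum]
  -- pointwise identity
  have hF3 : ∀ y : V, gGam m w f f y - f y * glap m w f y
      = 1 / (2 * m y) * ∑ z, ((f z - 2 * f y) ^ 2 - f y ^ 2) * w y z := by
    intro y
    rw [gGam_eq]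
    simp only [glap, Finset.mul_sum, ← Finset.sum_sub_distrib]
    exact Finset.sum_congr rfl (fun z _ => by ring)
  -- per-vertex coefficient
  have hPy : ∀ y ∈ univ \ ({a, b} : Finset V),
      (gGam m w f f y - f y * glap m w f y) * w a y
      = (n + 2) * K / (n - 1) / 4 * ∑ z, ((f z - 2 * f y) ^ 2 - f y ^ 2) * w y z := by
    intro y hy
    obtain ⟨hya, hyb⟩ := hmem y hy
    rw [hF3 y]
    have hd := hDb y hya hyb
    have hmy : m y ≠ 0 := ne_of_gt (hm0 y)
    have hcoef : 1 / (2 * m y) * w a y = (n + 2) * K / (n - 1) / 4 := by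
      field_simp at hd ⊢
      linear_combination 2 * hd
    calc 1 / (2 * m y) * (∑ z, ((f z - 2 * f y) ^ 2 - f y ^ 2) * w y z) * w a y
        = (1 / (2 * m y) * w a y) * ∑ z, ((f z - 2 * f y) ^ 2 - f y ^ 2) * w y z := by ring
      _ = (n + 2) * K / (n - 1) / 4 * ∑ z, ((f z - 2 * f y) ^ 2 - f y ^ 2) * w y z := by
          rw [hcoef]
  -- split the inner z-sum
  have hPy2 : ∀ y ∈ univ \ ({a, b} : Finset V),
      ∑ z, ((f z - 2 * f y) ^ 2 - f y ^ 2) * w y z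
      = (2 * f y ^ 2 + (f b - 2 * f y) ^ 2) * w a y
        + ∑ z ∈ univ \ ({a, b} : Finset V), ((f z - 2 * f y) ^ 2 - f y ^ 2) * w y z := by
    intro y hy
    obtain ⟨hya, hyb⟩ := hmem y hy
    rw [hsplit (fun z => ((f z - 2 * f y) ^ 2 - f y ^ 2) * w y z)]
    have hwya : w y a = w a y := (hsym a y).symm
    have hwyb : w y b = w a y := by rw [hsym y b]; exact (hwe y hya hyb).symm
    rw [hf, hwya, hwyb]
    ring
  -- expanding Γ₂
  have e0 : gGam2 m w f f a = 1 / 2 * (glap m w (gGam m w f f) a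
      - 2 * gGam m w (glap m w f) f a) := by
    simp only [gGam2]
    rw [gGam_comm m w f (glap m w f) a]
    ring
  have e1 : glap m w (gGam m w f f) a
      = 1 / m a * ∑ y, (gGam m w f f y - gGam m w f f a) * w a y := rfl
  have e2 : gGam m w (glap m w f) f a
      = 1 / (2 * m a) * ∑ y, (glap m w f y - glap m w f a) * f y * w a y := by
    rw [gGam_eq]
    congr 1
    exact Finset.sum_congr rfl (fun y _ => by rw [hf]; ring)
  have e3 : 2 * m a * gGam2 m w f f a
      = (∑ y, (gGam m w f f y - gGam m w f f a) * w a y)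
        - ∑ y, (glap m w f y - glap m w f a) * f y * w a y := by
    rw [e0, e1, e2]
    field_simp
  have e4 : 2 * m a * gGam2 m w f f a
      = (∑ y, (gGam m w f f y - f y * glap m w f y) * w a y)
        - gGam m w f f a * (∑ y, w a y) + glap m w f a * ∑ y, f y * w a y := by
    rw [e3]
    simp only [Finset.mul_sum, ← Finset.sum_sub_distrib, ← Finset.sum_add_distrib]
    exact Finset.sum_congr rfl fun y _ => by ring
  have e5 : ∑ y, (gGam m w f f y - f y * glap m w f y) * w a y
      = ∑ y ∈ univ \ ({a, b} : Finset V), (gGam m w f f y - f y * glap m w f y) * w a y := by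
    rw [hsplit (fun y => (gGam m w f f y - f y * glap m w f y) * w a y), hloop, hnadj]
    ring
  have e6 : ∑ y ∈ univ \ ({a, b} : Finset V), (gGam m w f f y - f y * glap m w f y) * w a y
      = (n + 2) * K / (n - 1) / 4 *
        (2 * (∑ y ∈ univ \ ({a, b} : Finset V), f y ^ 2 * w a y)
          + (∑ y ∈ univ \ ({a, b} : Finset V), (f b - 2 * f y) ^ 2 * w a y)
          + ∑ y ∈ univ \ ({a, b} : Finset V), ∑ z ∈ univ \ ({a, b} : Finset V),
              ((f z - 2 * f y) ^ 2 - f y ^ 2) * w y z) := by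
    rw [Finset.sum_congr rfl (fun y hy => by rw [hPy y hy, hPy2 y hy])]
    rw [← Finset.mul_sum]
    congr 1
    rw [Finset.mul_sum, ← Finset.sum_add_distrib, ← Finset.sum_add_distrib]
    exact Finset.sum_congr rfl fun y _ => by ring
  have hU : ∑ y ∈ univ \ ({a, b} : Finset V), (f b - 2 * f y) ^ 2 * w a y
      = (∑ y ∈ univ \ ({a, b} : Finset V), w a y) * f b ^ 2
        - 4 * f b * (∑ y ∈ univ \ ({a, b} : Finset V), f y * w a y)
        + 4 * ∑ y ∈ univ \ ({a, b} : Finset V), f y ^ 2 * w a y := by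
    rw [Finset.sum_mul, Finset.mul_sum, Finset.mul_sum, ← Finset.sum_sub_distrib,
      ← Finset.sum_add_distrib]
    exact Finset.sum_congr rfl fun y _ => by ring
  have hCS : (∑ y ∈ univ \ ({a, b} : Finset V), f y * w a y) ^ 2
      ≤ (∑ y ∈ univ \ ({a, b} : Finset V), w a y)
        * ∑ y ∈ univ \ ({a, b} : Finset V), f y ^ 2 * w a y :=
    Finset.sum_sq_le_sum_mul_sum_of_sq_eq_mul _ (fun i _ => hge a i)
      (fun i _ =>  mul_nonneg (sq_nonneg _) (hge a i)) (fun i _ => by ring)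
  have hswap : (∑ y ∈ univ \ ({a, b} : Finset V), ∑ z ∈ univ \ ({a, b} : Finset V),
        ((f z - 2 * f y) ^ 2 - f y ^ 2) * w y z)
      = ∑ y ∈ univ \ ({a, b} : Finset V), ∑ z ∈ univ \ ({a, b} : Finset V),
        ((f y - 2 * f z) ^ 2 - f z ^ 2) * w y z := by
    rw [Finset.sum_comm]
    exact Finset.sum_congr rfl fun y _ => Finset.sum_congr rfl fun z _ => by rw [hsym]
  have hQ : 0 ≤ ∑ y ∈ univ \ ({a, b} : Finset V), ∑ z ∈ univ \ ({a, b} : Finset V),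
      ((f z - 2 * f y) ^ 2 - f y ^ 2) * w y z := by
    have h2 : 0 ≤ ∑ y ∈ univ \ ({a, b} : Finset V), ∑ z ∈ univ \ ({a, b} : Finset V),
        (((f z - 2 * f y) ^ 2 - f y ^ 2) * w y z
          + ((f y - 2 * f z) ^ 2 - f z ^ 2) * w y z) := by
      apply Finset.sum_nonneg; intro y _
      apply Finset.sum_nonneg; intro z _
      have h4 : ((f z - 2 * f y) ^ 2 - f y ^ 2) * w y z
          + ((f y - 2 * f z) ^ 2 - f z ^ 2) * w y z
          = 4 * (f y - f z) ^ 2 * w y z := by ring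
      rw [h4]
      exact mul_nonneg (by positivity) (hge y z)
    simp only [Finset.sum_add_distrib] at h2
    rw [← hswap] at h2
    linarith
  have hWt : (∑ y ∈ univ \ ({a, b} : Finset V), w a y) = n * K / (n - 1) * m a := by
    have h := hDega
    rw [hWsum] at h
    rw [← h]
    field_simp
  have hMain : 2 * m a * gGam2 m w f f a
      = (n + 2) * K / (n - 1) / 4 *
          (2 * (∑ y ∈ univ \ ({a, b} : Finset V), f y ^ 2 * w a y)
            + (∑ y ∈ univ \ ({a, b} : Finset V), (f b - 2 * f y) ^ 2 * w a y)
            + ∑ y ∈ univ \ ({a, b} : Finset V), ∑ z ∈ univ \ ({a, b} : Finset V),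
                ((f z - 2 * f y) ^ 2 - f y ^ 2) * w y z)
        - (∑ y ∈ univ \ ({a, b} : Finset V), w a y)
            * (∑ y ∈ univ \ ({a, b} : Finset V), f y ^ 2 * w a y) / (2 * m a)
        + (∑ y ∈ univ \ ({a, b} : Finset V), f y * w a y) ^ 2 / m a := by
    rw [e4, e5, e6, hB, hA, hWsum, hSsum]
    field_simp
  rw [hA, hB]
  exact arith K n (m a) _ _ _ _ _ (f b) _ hK hn hma hU hWt hCS hQ hMain

lemma glap_shift (m : V → ℝ) (w : V → V → ℝ) (f : V → ℝ) (c : ℝ) (x : V) :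
    glap m w (fun z => f z - c) x = glap m w f x := by
  simp only [glap]
  congr 1
  exact Finset.sum_congr rfl (fun y _ => by ring)

lemma gGam_shift (m : V → ℝ) (w : V → V → ℝ) (u v : V → ℝ) (c d : ℝ) (x : V) :
    gGam m w (fun z => u z - c) (fun z => v z - d) x = gGam m w u v x := by
  rw [gGam_eq, gGam_eq]
  congr 1
  exact Finset.sum_congr rfl (fun y _ => by ring)

lemma gGam_shift_right (m : V → ℝ) (w : V → V → ℝ) (u v : V → ℝ) (d : ℝ) (x : V) :
    gGam m w u (fun z => v z - d) x = gGam m w u v x := by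
  rw [gGam_eq, gGam_eq]
  congr 1
  exact Finset.sum_congr rfl (fun y _ => by ring)

lemma gGam_shift_left (m : V → ℝ) (w : V → V → ℝ) (u v : V → ℝ) (c : ℝ) (x : V) :
    gGam m w (fun z => u z - c) v x = gGam m w u v x := by
  rw [gGam_eq, gGam_eq]
  congr 1
  exact Finset.sum_congr rfl (fun y _ => by ring)

lemma gGam2_shift (m : V → ℝ) (w : V → V → ℝ) (f : V → ℝ) (c : ℝ) (x : V) :
    gGam2 m w (fun z => f z - c) (fun z => f z - c) x = gGam2 m w f f x := by
  have e1 : gGam m w (fun z => f z - c) (fun z => f z - c) = gGam m w f f :=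
    funext (fun y => gGam_shift m w f f c c y)
  have e2 : glap m w (fun z => f z - c) = glap m w f :=
    funext (fun y => glap_shift m w f c y)
  simp only [gGam2, e1, e2]
  rw [gGam_shift_right, gGam_shift_left]

lemma key1 (m : V → ℝ) (w : V → V → ℝ) (a b : V) (hWG : WeightedGraph m w)
    (K n : ℝ) (hK : 0 < K) (hn : 1 < n) (hab : a ≠ b) (hnadj : w a b = 0)
    (hwe : ∀ x, x ≠ a → x ≠ b → w a x = w b x)
    (hDega : (1 / m a) * ∑ y, w a y = n * K / (n - 1))
    (hDb : ∀ x, x ≠ a → x ≠ b → 2 * w a x / m x = (n + 2) * K / (n - 1))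
    (f : V → ℝ) :
    gGam2 m w f f a ≥ 1 / n * glap m w f a ^ 2 + K * gGam m w f f a := by
  have h := key0 m w a b hWG K n hK hn hab hnadj hwe hDega hDb
    (fun z => f z - f a) (by simp)
  rwa [gGam2_shift, glap_shift, gGam_shift] at h


/-- under (A1)-(A4), the condition `CD(K,n)` holds at each of the
two boundary vertices. -/
theorem stmt14 (m : V → ℝ) (w : V → V → ℝ) (a b : V) (hW : WeightedGraph m w)
    (K n : ℝ) (hK : 0 < K) (hn : 1 < n)
    (hab : a ≠ b) (hnadj : w a b = 0)
    (hm : m a = m b)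
    (hadj : ∀ x, x ∉ ({a, b} : Finset V) → 0 < w a x)
    (hwe : ∀ x, x ∉ ({a, b} : Finset V) → w a x = w b x)
    (hDega : (1 / m a) * ∑ y, w a y = n * K / (n - 1))
    (hDegb : (1 / m b) * ∑ y, w b y = n * K / (n - 1))
    (hDb : ∀ x, x ∉ ({a, b} : Finset V) → 2 * w a x / m x = (n + 2) * K / (n - 1)) :
    ∀ f : V → ℝ,
      (gGam2 m w f f a ≥ (1 / n) * (glap m w f a) ^ 2 + K * gGam m w f f a) ∧
      (gGam2 m w f f b ≥ (1 / n) * (glap m w f b) ^ 2 + K * gGam m w f f b) := by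
  
  intro f
  have hsym := hW.2.1
  have hmem : ∀ x : V, x ≠ a → x ≠ b → x ∉ ({a, b} : Finset V) := by
    intro x h1 h2
    simp [h1, h2]
  have hwe' : ∀ x, x ≠ a → x ≠ b → w a x = w b x := fun x h1 h2 => hwe x (hmem x h1 h2)
  constructor
  · exact key1 m w a b hW K n hK hn hab hnadj hwe' hDega
      (fun x h1 h2 => hDb x (hmem x h1 h2)) f
  · apply key1 m w b a hW K n hK hn hab.symm (by rw [hsym]; exact hnadj)
      (fun x h1 h2 => (hwe' x h2 h1).symm) hDegb
      (fun x h1 h2 => by rw [← hwe' x h2 h1]; exact hDb x (hmem x h2 h1))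
end

section
/- Rigidity when the interior induces no edges, finite n: let (G,m,w,B) be a connected finite weighted graph with boundary with E(Ω,Ω) = ∅, satisfying CD(K,n) with K > 0 and 2 < n < ∞, and σ₂ = nK/(n−1). Then |Ω| = 1; denoting the boundary vertices 1,2 and the interior vertex x, one has m₁ = m₂ = m, w_{1x} = w_{2x} = mnK/(n−1), and m_x = 2nm/(n+2). (In particular |V(G)| = 3 and G is a path.) -/
open Finset

variable {V : Type*} [Fintype V] [DecidableEq V]

set_option linter.unusedSectionVars false

namespace Stmt17Aux

variable (m : V → ℝ) (w : V → V → ℝ)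

/-- delta function -/
noncomputable def dd (z : V) : V → ℝ := fun v => if v = z then 1 else 0

lemma glap_comb (a b : V → ℝ) (c : ℝ) (x : V) :
    glap m w (fun z => a z + c * b z) x = glap m w a x + c * glap m w b x := by
  unfold glap
  have h : ∀ y ∈ (univ : Finset V),
      ((a y + c * b y) - (a x + c * b x)) * w x y
        = (a y - a x) * w x y + c * ((b y - b x) * w x y) := fun y _ => by ring
  rw [Finset.sum_congr rfl h, Finset.sum_add_distrib, ← Finset.mul_sum]
  ring

lemma gGam_eq (u v : V → ℝ) (x : V) :
    gGam m w u v x = (1 / (2 * m x)) * ∑ y, (u y - u x) * (v y - v x) * w x y := by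
  unfold gGam glap
  have key : ∑ y, (u y - u x) * (v y - v x) * w x y
      = (∑ y, (u y * v y - u x * v x) * w x y) - v x * ∑ y, (u y - u x) * w x y
        - u x * ∑ y, (v y - v x) * w x y := by
    rw [Finset.mul_sum, Finset.mul_sum, ← Finset.sum_sub_distrib, ← Finset.sum_sub_distrib]
    exact Finset.sum_congr rfl fun y _ => by ring
  rw [key]
  ring

lemma gGam_symm (u v : V → ℝ) (x : V) : gGam m w u v x = gGam m w v u x := by
  rw [gGam_eq, gGam_eq]
  congr 1
  exact Finset.sum_congr rfl fun y _ => by ring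

lemma glap_dd {x z : V} (hxz : x ≠ z) : glap m w (dd z) x = (1 / m x) * w x z := by
  unfold glap
  congr 1
  rw [show (∑ y, (dd z y - dd z x) * w x y) = ∑ y, (if y = z then w x z else 0) from
    Finset.sum_congr rfl fun y _ => by
      by_cases h : y = z <;> simp [dd, h, hxz]]
  simp

lemma glap_dd_self (z : V) (hzz : w z z = 0) :
    glap m w (dd z) z = -((1 / m z) * ∑ y, w z y) := by
  unfold glap
  have h : ∀ y ∈ (univ : Finset V),
      (dd z y - dd z z) * w z y = -(w z y) + (if y = z then w z y else 0) := by
    intro y _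
    by_cases h : y = z
    · subst h; simp [dd]
    · simp [dd, h]
  rw [Finset.sum_congr rfl h, Finset.sum_add_distrib]
  simp [hzz]

lemma gGam_dd (u : V → ℝ) {x z : V} (hxz : x ≠ z) :
    gGam m w u (dd z) x = (1 / (2 * m x)) * ((u z - u x) * w x z) := by
  rw [gGam_eq]
  congr 1
  rw [show (∑ y, (u y - u x) * (dd z y - dd z x) * w x y)
      = ∑ y, (if y = z then (u z - u x) * w x z else 0) from
    Finset.sum_congr rfl fun y _ => by
      by_cases h : y = z
      · subst h; simp [dd, hxz]
      · simp [dd, h, hxz]]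
  simp

lemma gGam_dd_self (u : V → ℝ) (z : V) :
    gGam m w u (dd z) z = -(1 / 2) * glap m w u z := by
  rw [gGam_eq]
  unfold glap
  have h : ∀ y ∈ (univ : Finset V),
      (u y - u z) * (dd z y - dd z z) * w z y = -((u y - u z) * w z y) := by
    intro y _
    by_cases h : y = z
    · subst h; simp [dd]
    · simp [dd, h]
      ring
  rw [Finset.sum_congr rfl h]
  rw [Finset.sum_neg_distrib]
  ring

lemma gGam_comb2 (a b c d : V → ℝ) (s t : ℝ) (x : V) :
    gGam m w (fun z => a z + s * b z) (fun z => c z + t * d z) x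
      = gGam m w a c x + s * gGam m w b c x + t * gGam m w a d x
        + s * t * gGam m w b d x := by
  rw [gGam_eq, gGam_eq, gGam_eq, gGam_eq, gGam_eq]
  have h : ∀ y ∈ (univ : Finset V),
      ((a y + s * b y) - (a x + s * b x)) * ((c y + t * d y) - (c x + t * d x)) * w x y
        = (a y - a x) * (c y - c x) * w x y
          + s * ((b y - b x) * (c y - c x) * w x y)
          + t * ((a y - a x) * (d y - d x) * w x y)
          + (s * t) * ((b y - b x) * (d y - d x) * w x y) := fun y _ => by ring
  rw [Finset.sum_congr rfl h, Finset.sum_add_distrib, Finset.sum_add_distrib,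
    Finset.sum_add_distrib, ← Finset.mul_sum, ← Finset.mul_sum, ← Finset.mul_sum]
  ring

lemma glap_comb4 (a b c d : V → ℝ) (s t r : ℝ) (x : V) :
    glap m w (fun z => a z + s * b z + t * c z + r * d z) x
      = glap m w a x + s * glap m w b x + t * glap m w c x + r * glap m w d x := by
  unfold glap
  have h : ∀ y ∈ (univ : Finset V),
      ((a y + s * b y + t * c y + r * d y) - (a x + s * b x + t * c x + r * d x)) * w x y
        = (a y - a x) * w x y + s * ((b y - b x) * w x y) + t * ((c y - c x) * w x y)
          + r * ((d y - d x) * w x y) := fun y _ => by ring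
  rw [Finset.sum_congr rfl h, Finset.sum_add_distrib, Finset.sum_add_distrib,
    Finset.sum_add_distrib, ← Finset.mul_sum, ← Finset.mul_sum, ← Finset.mul_sum]
  ring

lemma gGam2_comb (u f : V → ℝ) (t : ℝ) (x : V) :
    gGam2 m w (fun z => u z + t * f z) (fun z => u z + t * f z) x
      = gGam2 m w u u x + t * (gGam2 m w u f x + gGam2 m w f u x)
        + t ^ 2 * gGam2 m w f f x := by
  unfold gGam2
  have h1 : gGam m w (fun z => u z + t * f z) (fun z => u z + t * f z)
      = fun y => gGam m w u u y + t * gGam m w f u y + t * gGam m w u f y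
        + (t * t) * gGam m w f f y := funext fun y => by
    rw [gGam_comb2]
  have h2 : glap m w (fun z => u z + t * f z)
      = fun y => glap m w u y + t * glap m w f y := funext fun y => by
    rw [glap_comb]
  rw [h1, h2, glap_comb4, gGam_comb2, gGam_comb2]
  ring

lemma glap_sq_comb (u f : V → ℝ) (t : ℝ) (x : V) :
    (glap m w (fun z => u z + t * f z) x) ^ 2
      = (glap m w u x) ^ 2 + 2 * t * (glap m w u x * glap m w f x)
        + t ^ 2 * (glap m w f x) ^ 2 := by
  rw [glap_comb]
  ring

lemma gGam2_symm (u v : V → ℝ) (x : V) : gGam2 m w u v x = gGam2 m w v u x := by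
  unfold gGam2
  have h1 : gGam m w u v = gGam m w v u := funext fun y => gGam_symm m w u v y
  rw [h1, gGam_symm m w (glap m w u) v x, gGam_symm m w u (glap m w v) x]
  ring

/-- expansion of the CD-defect quadratic form -/
lemma Q_expand (K n : ℝ) (u f : V → ℝ) (t : ℝ) (x : V) :
    gGam2 m w (fun z => u z + t * f z) (fun z => u z + t * f z) x
        - (1 / n) * (glap m w (fun z => u z + t * f z) x) ^ 2
        - K * gGam m w (fun z => u z + t * f z) (fun z => u z + t * f z) x
      = (gGam2 m w u u x - (1 / n) * (glap m w u x) ^ 2 - K * gGam m w u u x)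
        + 2 * t * (gGam2 m w u f x - (1 / n) * (glap m w u x * glap m w f x)
            - K * gGam m w u f x)
        + t ^ 2 * (gGam2 m w f f x - (1 / n) * (glap m w f x) ^ 2
            - K * gGam m w f f x) := by
  rw [gGam2_comb, glap_sq_comb, gGam_comb2, gGam2_symm m w f u x, gGam_symm m w f u x]
  ring

lemma antisym_sum (g : V → V → ℝ) (h : ∀ x y, g x y = - g y x) :
    ∑ x, ∑ y, g x y = 0 := by
  have h1 : ∑ x, ∑ y, g x y = ∑ x, ∑ y, (- g x y) := by
    rw [Finset.sum_comm]
    exact Finset.sum_congr rfl fun x _ => Finset.sum_congr rfl fun y _ => (h y x).trans rfl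
  have h2 : ∑ x, ∑ y, (- g x y) = - ∑ x, ∑ y, g x y := by
    simp
  linarith [h1, h2, h1.trans h2]

lemma sum_m_glap (hm : ∀ v, m v ≠ 0) (hw : ∀ x y, w x y = w y x) (u : V → ℝ) :
    ∑ x, m x * glap m w u x = 0 := by
  have h1 : ∀ x, m x * glap m w u x = ∑ y, (u y - u x) * w x y := by
    intro x
    unfold glap
    rw [← mul_assoc, mul_one_div, div_self (hm x), one_mul]
  rw [Finset.sum_congr rfl fun x _ => h1 x]
  exact antisym_sum (fun x y => (u y - u x) * w x y) fun x y => by rw [hw x y]; ring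

lemma sum_selfadj (hm : ∀ v, m v ≠ 0) (hw : ∀ x y, w x y = w y x) (u v : V → ℝ) :
    ∑ x, m x * (v x * glap m w u x) = ∑ x, m x * (u x * glap m w v x) := by
  have h1 : ∀ (a b : V → ℝ) (x : V), m x * (b x * glap m w a x)
      = ∑ y, b x * ((a y - a x) * w x y) := by
    intro a b x
    unfold glap
    rw [← Finset.mul_sum, ← mul_assoc, mul_comm (m x) (b x), mul_assoc, ← mul_assoc (m x),
      mul_one_div, div_self (hm x), one_mul]
  rw [Finset.sum_congr rfl fun x _ => h1 u v x, Finset.sum_congr rfl fun x _ => h1 v u x]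
  have key := antisym_sum
    (fun x y => v x * ((u y - u x) * w x y) - u x * ((v y - v x) * w x y))
    (fun x y => by rw [hw x y]; ring)
  rw [Finset.sum_congr rfl (fun x (_ : x ∈ univ) => Finset.sum_sub_distrib _ _),
    Finset.sum_sub_distrib] at key
  linarith [key]

lemma sum_m_gGam (hm : ∀ v, m v ≠ 0) (hw : ∀ x y, w x y = w y x) (u v : V → ℝ) :
    ∑ x, m x * gGam m w u v x = - ∑ x, m x * (v x * glap m w u x) := by
  have h1 : ∀ x, m x * gGam m w u v x
      = (1 / 2) * (m x * glap m w (fun z => u z * v z) x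
          - m x * (v x * glap m w u x) - m x * (u x * glap m w v x)) := by
    intro x; unfold gGam; ring
  rw [Finset.sum_congr rfl fun x _ => h1 x, ← Finset.mul_sum]
  rw [Finset.sum_sub_distrib, Finset.sum_sub_distrib]
  rw [sum_m_glap m w hm hw, sum_selfadj m w hm hw v u]
  ring

lemma sum_m_gGam2 (hm : ∀ v, m v ≠ 0) (hw : ∀ x y, w x y = w y x) (u : V → ℝ) :
    ∑ x, m x * gGam2 m w u u x = ∑ x, m x * (glap m w u x) ^ 2 := by
  have h1 : ∀ x, m x * gGam2 m w u u x
      = (1 / 2) * (m x * glap m w (gGam m w u u) x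
          - m x * gGam m w (glap m w u) u x - m x * gGam m w u (glap m w u) x) := by
    intro x; unfold gGam2; ring
  rw [Finset.sum_congr rfl fun x _ => h1 x, ← Finset.mul_sum]
  rw [Finset.sum_sub_distrib, Finset.sum_sub_distrib]
  rw [sum_m_glap m w hm hw]
  rw [Finset.sum_congr rfl fun x (_ : x ∈ univ) =>
    congrArg (m x * ·) (gGam_symm m w (glap m w u) u x)]
  have h2 := sum_m_gGam m w hm hw u (glap m w u)
  have h3 : ∀ x, m x * (glap m w u x * glap m w u x) = m x * (glap m w u x) ^ 2 :=
    fun x => by ring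
  rw [Finset.sum_congr rfl fun x _ => h3 x] at h2
  linarith [h2]

/-- Pointwise equality in CD for a Steklov eigenfunction achieving the Lichnerowicz bound. -/
lemma pointwise_CD_eq (B : Finset V) (K n σ : ℝ) (hm : ∀ v, 0 < m v)
    (hw : ∀ x y, w x y = w y x) (hCD : CD m w K n) (u : V → ℝ)
    (hharm : ∀ x, x ∉ B → glap m w u x = 0) (heig : ∀ x ∈ B, - glap m w u x = σ * u x)
    (hσ : σ * (n - 1) = n * K) (hn : n ≠ 0) :
    ∀ x, gGam2 m w u u x - (1 / n) * (glap m w u x) ^ 2 - K * gGam m w u u x = 0 := by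
  have hm' : ∀ v, m v ≠ 0 := fun v => (hm v).ne'
  set F : V → ℝ := fun x =>
    gGam2 m w u u x - (1 / n) * (glap m w u x) ^ 2 - K * gGam m w u u x with hF
  have hF0 : ∀ x, 0 ≤ F x := by
    intro x
    have := hCD u x
    simp only [hF]
    linarith
  have hglapval : ∀ x, glap m w u x = if x ∈ B then -(σ * u x) else 0 := by
    intro x
    by_cases hx : x ∈ B
    · rw [if_pos hx]; linarith [heig x hx]
    · rw [if_neg hx]; exact hharm x hx
  set T : ℝ := ∑ x, (if x ∈ B then m x * u x ^ 2 else 0) with hT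
  have hsq : ∑ x, m x * (glap m w u x) ^ 2 = σ ^ 2 * T := by
    rw [hT, Finset.mul_sum]
    refine Finset.sum_congr rfl fun x _ => ?_
    rw [hglapval x]
    by_cases hx : x ∈ B <;> simp [hx] <;> ring
  have hug : ∑ x, m x * (u x * glap m w u x) = -(σ * T) := by
    rw [hT, Finset.mul_sum, ← Finset.sum_neg_distrib]
    refine Finset.sum_congr rfl fun x _ => ?_
    rw [hglapval x]
    by_cases hx : x ∈ B <;> simp [hx] <;> ring
  have hsum : ∑ x, m x * F x = 0 := by
    have hsplit : ∑ x, m x * F x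
        = (∑ x, m x * gGam2 m w u u x) - (1 / n) * ∑ x, m x * (glap m w u x) ^ 2
          - K * ∑ x, m x * gGam m w u u x := by
      rw [Finset.mul_sum, Finset.mul_sum, ← Finset.sum_sub_distrib, ← Finset.sum_sub_distrib]
      exact Finset.sum_congr rfl fun x _ => by simp only [hF]; ring
    rw [hsplit, sum_m_gGam2 m w hm' hw, sum_m_gGam m w hm' hw, hsq, hug]
    have h0 : σ - σ / n - K = 0 := by
      field_simp
      linear_combination hσ
    linear_combination (σ * T) * h0
  have hall := (Finset.sum_eq_zero_iff_of_nonneg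
    (fun x (_ : x ∈ univ) => mul_nonneg (hm x).le (hF0 x))).mp hsum
  intro x
  have := hall x (Finset.mem_univ x)
  have := mul_eq_zero.mp this
  rcases this with h | h
  · exact absurd h (hm' x)
  · exact h

/-- Polarization: the CD defect bilinear form vanishes against the eigenfunction. -/
lemma polarize (K n : ℝ) (hCD : CD m w K n) (u : V → ℝ)
    (hQu : ∀ x, gGam2 m w u u x - (1 / n) * (glap m w u x) ^ 2 - K * gGam m w u u x = 0) :
    ∀ (f : V → ℝ) (x : V),
      gGam2 m w u f x - (1 / n) * (glap m w u x * glap m w f x) - K * gGam m w u f x = 0 := by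
  intro f x
  set Bv : ℝ := gGam2 m w u f x - (1 / n) * (glap m w u x * glap m w f x)
    - K * gGam m w u f x with hBv
  set A : ℝ := gGam2 m w f f x - (1 / n) * (glap m w f x) ^ 2 - K * gGam m w f f x with hA
  have hA0 : 0 ≤ A := by
    have := hCD f x
    simp only [hA]
    linarith
  have key : ∀ t : ℝ, 0 ≤ 2 * t * Bv + t ^ 2 * A := by
    intro t
    have h := hCD (fun z => u z + t * f z) x
    have h2 := Q_expand m w K n u f t x
    rw [hQu x] at h2
    simp only [← hBv, ← hA] at h2
    have h4 : 0 ≤ 0 + 2 * t * Bv + t ^ 2 * A := by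
      rw [← h2]; linarith [h]
    linarith [h4]
  show Bv = 0
  by_contra hB
  have hA1 : 0 < A + 1 := by linarith
  have h1 := key (-(Bv) / (A + 1))
  have heq : (A + 1) ^ 2 * (2 * (-(Bv) / (A + 1)) * Bv + (-(Bv) / (A + 1)) ^ 2 * A)
      = -2 * Bv ^ 2 * (A + 1) + Bv ^ 2 * A := by
    field_simp
  have h3 : 0 ≤ -2 * Bv ^ 2 * (A + 1) + Bv ^ 2 * A := by
    rw [← heq]
    exact mul_nonneg (sq_nonneg _) h1
  have hb2 : 0 < Bv ^ 2 := lt_of_le_of_ne (sq_nonneg _) (Ne.symm (pow_ne_zero 2 hB))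
  nlinarith [h3, hb2, hA0, mul_nonneg hb2.le hA0]

/-- Master computation: `Γ₂(u, δ_q)(p)` for a non-adjacent pair `p ≠ q`. -/
lemma M1 (u : V → ℝ) {p q : V} (hpq : p ≠ q) (h0 : w p q = 0) :
    gGam2 m w u (dd q) p
      = (1 / (4 * m p)) * ∑ y, (w p y * w y q * (1 / m y)) * (u p + u q - 2 * u y) := by
  unfold gGam2
  rw [show glap m w (gGam m w u (dd q)) p
      = (1 / m p) * ∑ y, (gGam m w u (dd q) y - gGam m w u (dd q) p) * w p y from rfl]
  rw [gGam_dd m w (glap m w u) hpq]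
  rw [gGam_eq m w u (glap m w (dd q)) p]
  rw [gGam_dd m w u hpq]
  rw [glap_dd m w hpq]
  have hT1 : ∀ y ∈ (univ : Finset V),
      (gGam m w u (dd q) y - (1 / (2 * m p)) * ((u q - u p) * w p q)) * w p y
        = ((u q - u y) * w y q * (1 / (2 * m y))) * w p y := by
    intro y _
    by_cases hy : y = q
    · subst hy; rw [h0]; ring
    · rw [gGam_dd m w u hy, h0]; ring
  have hT3 : ∀ y ∈ (univ : Finset V),
      (u y - u p) * (glap m w (dd q) y - (1 / m p) * w p q) * w p y
        = ((u y - u p) * (w y q * (1 / m y))) * w p y := by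
    intro y _
    by_cases hy : y = q
    · subst hy; rw [h0]; ring
    · rw [glap_dd m w hy, h0]; ring
  rw [Finset.sum_congr rfl hT1, Finset.sum_congr rfl hT3, h0]
  have hC : ∀ y ∈ (univ : Finset V),
      (w p y * w y q * (1 / m y)) * (u p + u q - 2 * u y)
        = 2 * (((u q - u y) * w y q * (1 / (2 * m y))) * w p y)
          + (-1) * (((u y - u p) * (w y q * (1 / m y))) * w p y) := fun y _ => by ring
  rw [Finset.sum_congr rfl hC, Finset.sum_add_distrib, ← Finset.mul_sum, ← Finset.mul_sum]
  ring

/-- Master computation: `Γ₂(u, δ_p)(x)` for an adjacent pair with no common neighbours. -/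
lemma M2 (u : V → ℝ) {x p : V} (hxp : x ≠ p) (hc : ∀ y, w x y * w y p = 0)
    (hpp : w p p = 0) :
    gGam2 m w u (dd p) x
      = (1 / (4 * m x)) * (w x p *
          (-2 * glap m w u p + 2 * glap m w u x
            + ((1 / m p) * (∑ z, w p z) - (1 / m x) * (∑ z, w x z)) * (u p - u x))) := by
  unfold gGam2
  rw [show glap m w (gGam m w u (dd p)) x
      = (1 / m x) * ∑ y, (gGam m w u (dd p) y - gGam m w u (dd p) x) * w x y from rfl]
  rw [gGam_dd m w (glap m w u) hxp]
  rw [gGam_eq m w u (glap m w (dd p)) x]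
  rw [gGam_dd m w u hxp]
  rw [glap_dd m w hxp]
  have hT1 : ∀ y ∈ (univ : Finset V),
      (gGam m w u (dd p) y - (1 / (2 * m x)) * ((u p - u x) * w x p)) * w x y
        = (-((1 / (2 * m x)) * ((u p - u x) * w x p))) * w x y
          + (if y = p then (-(1 / 2) * glap m w u p) * w x p else 0) := by
    intro y _
    by_cases hy : y = p
    · rw [hy, gGam_dd_self m w u p, if_pos rfl]
      ring
    · rw [gGam_dd m w u hy, if_neg hy]
      linear_combination ((1 / (2 * m y)) * (u p - u y)) * hc y
  have hT3 : ∀ y ∈ (univ : Finset V),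
      (u y - u x) * (glap m w (dd p) y - (1 / m x) * w x p) * w x y
        = (-((1 / m x) * w x p)) * ((u y - u x) * w x y)
          + (if y = p then (-((1 / m p) * ∑ z, w p z)) * ((u p - u x) * w x p) else 0) := by
    intro y _
    by_cases hy : y = p
    · rw [hy, glap_dd_self m w p hpp, if_pos rfl]
      ring
    · rw [glap_dd m w hy, if_neg hy]
      linear_combination ((u y - u x) * (1 / m y)) * hc y
  rw [Finset.sum_congr rfl hT1, Finset.sum_congr rfl hT3]
  rw [Finset.sum_add_distrib, Finset.sum_add_distrib, ← Finset.mul_sum, ← Finset.mul_sum]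
  simp only [Finset.sum_ite_eq', Finset.mem_univ, if_true]
  rw [show glap m w u x = (1 / m x) * ∑ y, (u y - u x) * w x y from rfl]
  ring

lemma gGam_dd_dd_self {x : V} (hxx : w x x = 0) :
    gGam m w (dd x) (dd x) x = (1 / (2 * m x)) * ∑ y, w x y := by
  rw [gGam_eq]
  congr 1
  have h : ∀ y ∈ (univ : Finset V),
      (dd x y - dd x x) * (dd x y - dd x x) * w x y
        = w x y + (if y = x then -(w x y) else 0) := by
    intro y _
    by_cases hy : y = x
    · subst hy; simp [dd]
    · simp [dd, hy]
  rw [Finset.sum_congr rfl h, Finset.sum_add_distrib]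
  simp [hxx]

lemma gGam_dd_dd_other {x y : V} (hyx : y ≠ x) :
    gGam m w (dd x) (dd x) y = (1 / (2 * m y)) * w y x := by
  rw [gGam_eq]
  congr 1
  rw [show (∑ v, (dd x v - dd x y) * (dd x v - dd x y) * w y v)
      = ∑ v, (if v = x then w y x else 0) from
    Finset.sum_congr rfl fun v _ => by
      by_cases hv : v = x
      · subst hv; simp [dd, hyx]
      · simp [dd, hv, hyx]]
  simp

/-- Master computation: `Γ₂(δ_x, δ_x)(x)`. -/
lemma M3 {x : V} (hxx : w x x = 0) :
    gGam2 m w (dd x) (dd x) x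
      = (3 / (4 * m x)) * (∑ y, w x y * w y x * (1 / m y))
        + ((1 / m x) * ∑ y, w x y) ^ 2 / 4 := by
  unfold gGam2
  rw [show glap m w (gGam m w (dd x) (dd x)) x
      = (1 / m x) * ∑ y, (gGam m w (dd x) (dd x) y - gGam m w (dd x) (dd x) x) * w x y
      from rfl]
  rw [gGam_symm m w (glap m w (dd x)) (dd x) x]
  rw [gGam_eq m w (dd x) (glap m w (dd x)) x]
  rw [gGam_dd_dd_self m w hxx]
  rw [glap_dd_self m w x hxx]
  have hT1 : ∀ y ∈ (univ : Finset V),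
      (gGam m w (dd x) (dd x) y - (1 / (2 * m x)) * ∑ z, w x z) * w x y
        = (1 / 2) * (w x y * w y x * (1 / m y))
          + (-((1 / (2 * m x)) * ∑ z, w x z)) * w x y := by
    intro y _
    by_cases hy : y = x
    · subst hy; rw [hxx]; ring
    · rw [gGam_dd_dd_other m w hy]; ring
  have hT3 : ∀ y ∈ (univ : Finset V),
      (dd x y - dd x x) * (glap m w (dd x) y - -((1 / m x) * ∑ z, w x z)) * w x y
        = -(w x y * w y x * (1 / m y)) + (-((1 / m x) * ∑ z, w x z)) * w x y := by
    intro y _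
    by_cases hy : y = x
    · subst hy
      rw [hxx]
      simp [dd]
    · rw [glap_dd m w hy]
      have h1 : dd x y = 0 := by simp [dd, hy]
      have h2 : dd x x = 1 := by simp [dd]
      rw [h1, h2]
      ring
  rw [Finset.sum_congr rfl hT1, Finset.sum_congr rfl hT3]
  rw [Finset.sum_add_distrib, Finset.sum_add_distrib, ← Finset.mul_sum, ← Finset.mul_sum,
    ← Finset.mul_sum, Finset.sum_neg_distrib]
  ring

lemma gGam2_dd_dd_cross {x z : V} (hxz : x ≠ z) (h0 : w x z = 0) (hxx : w x x = 0) :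
    gGam2 m w (dd x) (dd z) x = (1 / (4 * m x)) * ∑ y, w x y * w y z * (1 / m y) := by
  rw [M1 m w (dd x) hxz h0]
  congr 1
  refine Finset.sum_congr rfl fun y _ => ?_
  by_cases hy : y = x
  · rw [hy, hxx]; ring
  · have h1 : dd x x = 1 := by simp [dd]
    have h2 : dd x z = 0 := by simp [dd]; exact fun h => hxz h.symm
    have h3 : dd x y = 0 := by simp [dd, hy]
    rw [h1, h2, h3]; ring

lemma gGam2_dd_dd_nonadj {x z : V} (hxz : x ≠ z) (h0 : w x z = 0) (hzz : w z z = 0) :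
    gGam2 m w (dd z) (dd z) x = (1 / (4 * m x)) * ∑ y, w x y * w y z * (1 / m y) := by
  rw [M1 m w (dd z) hxz h0]
  congr 1
  refine Finset.sum_congr rfl fun y _ => ?_
  by_cases hy : y = z
  · rw [hy, hzz]; ring
  · have h1 : dd z x = 0 := by simp [dd, hxz]
    have h2 : dd z z = 1 := by simp [dd]
    have h3 : dd z y = 0 := by simp [dd, hy]
    rw [h1, h2, h3]; ring

lemma wgraph_adj (hw : ∀ x y, w x y = w y x) {a b : V} :
    (wgraph w).Adj a b ↔ a ≠ b ∧ 0 < w a b := by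
  unfold wgraph
  rw [SimpleGraph.fromRel_adj]
  constructor
  · rintro ⟨hne, h | h⟩
    · exact ⟨hne, h⟩
    · exact ⟨hne, by rw [hw a b]; exact h⟩
  · rintro ⟨hne, h⟩
    exact ⟨hne, Or.inl h⟩

lemma closure (hconn : (wgraph w).Connected) (S : Set V) {a : V} (ha : a ∈ S)
    (hcl : ∀ v ∈ S, ∀ v', (wgraph w).Adj v v' → v' ∈ S) : ∀ v, v ∈ S := by
  intro v
  obtain ⟨p⟩ := hconn.preconnected a v
  suffices H : ∀ {b c : V}, (wgraph w).Walk b c → b ∈ S → c ∈ S from H p ha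
  intro b c pw
  induction pw with
  | nil => exact id
  | cons h q ih => exact fun hb => ih (hcl _ hb _ h)

lemma exists_nbr (hw : ∀ x y, w x y = w y x) (hconn : (wgraph w).Connected)
    {a b : V} (hab : a ≠ b) (v : V) : ∃ y, y ≠ v ∧ 0 < w v y := by
  have hvt : ∃ t, t ≠ v := by
    by_cases h : a = v
    · exact ⟨b, fun hb => hab (by rw [h, hb])⟩
    · exact ⟨a, h⟩
  obtain ⟨t, ht⟩ := hvt
  obtain ⟨pw⟩ := hconn.preconnected v t
  cases pw with
  | nil => exact absurd rfl ht
  | cons h q =>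
    obtain ⟨hne, hpos⟩ := (wgraph_adj w hw).mp h
    exact ⟨_, Ne.symm hne, hpos⟩

lemma sum_pair_support (f : V → ℝ) {b c : V} (hbc : b ≠ c)
    (hz : ∀ y, y ≠ b → y ≠ c → f y = 0) : ∑ y, f y = f b + f c := by
  rw [← Finset.sum_subset (Finset.subset_univ ({b, c} : Finset V)) (fun y _ hy => by
    simp only [Finset.mem_insert, Finset.mem_singleton] at hy
    push_neg at hy
    exact hz y hy.1 hy.2)]
  exact Finset.sum_pair hbc

end Stmt17Aux

set_option maxHeartbeats 1000000 in
open Stmt17Aux in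
/-- rigidity when the interior induces no edges and `2 < n < ∞`:
the graph is a path on three vertices, with the stated measures and weights. -/
theorem stmt17 (m : V → ℝ) (w : V → V → ℝ) (B : Finset V) (hW : WeightedGraph m w)
    (hconn : (wgraph w).Connected) (hB : GraphBoundary w B)
    (hEmpty : ∀ x, x ∉ B → ∀ y, y ∉ B → w x y = 0)
    (K n : ℝ) (hK : 0 < K) (hn : 2 < n) (hCD : CD m w K n)
    (hs1 : SteklovEig m w B (n * K / (n - 1)))
    (hs2 : ∀ σ : ℝ, SteklovEig m w B σ → 0 < σ → n * K / (n - 1) ≤ σ) :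
    Fintype.card V = 3 ∧ Bᶜ.card = 1 ∧
    ∃ p q x : V, p ≠ q ∧ B = {p, q} ∧ x ∉ B ∧
      m p = m q ∧
      w p x = m p * n * K / (n - 1) ∧
      w q x = m p * n * K / (n - 1) ∧
      m x = 2 * n * m p / (n + 2) := by
  obtain ⟨hm, hsymm, hnn, hloop⟩ := hW
  obtain ⟨hBne, hBind, hBnbr⟩ := hB
  obtain ⟨u, ⟨p₀, hp₀B, hup₀⟩, hharm, heig⟩ := hs1
  clear hs2 hBne
  have hm' : ∀ v, m v ≠ 0 := fun v => (hm v).ne'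
  have hn1 : (0:ℝ) < n - 1 := by linarith
  have hn0 : (0:ℝ) < n := by linarith
  set σ : ℝ := n * K / (n - 1) with hσdef
  have hσrel : σ * (n - 1) = n * K := by rw [hσdef]; field_simp
  have hσpos : 0 < σ := by rw [hσdef]; positivity
  have hKs : K = σ - σ * (1 / n) := by
    rw [hσdef]; field_simp
  clear_value σ
  -- pointwise CD equality and polarization
  have hQu := pointwise_CD_eq m w B K n σ hm hsymm hCD u hharm heig hσrel hn0.ne'
  have hBil := polarize m w K n hCD u hQu
  -- glap values
  have hglapB : ∀ p ∈ B, glap m w u p = -(σ * u p) := fun p hp => by linarith [heig p hp]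
  -- no common neighbours across an interior-boundary pair
  have hcom : ∀ x, x ∉ B → ∀ p ∈ B, ∀ y, w x y * w y p = 0 := by
    intro x hx p hp y
    by_cases hy : y ∈ B
    · exact mul_eq_zero.mpr (Or.inr (hBind y hy p hp))
    · exact mul_eq_zero.mpr (Or.inl (hEmpty x hx y hy))
  -- a boundary vertex and its interior neighbour (for nontriviality)
  obtain ⟨x₀', hx₀'B, hwp₀x₀'⟩ := hBnbr p₀ hp₀B
  have hp₀x₀' : p₀ ≠ x₀' := fun h => hx₀'B (h ▸ hp₀B)
  -- The two fundamental equations for an adjacent interior-boundary pair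
  have hE34 : ∀ x, x ∉ B → ∀ p ∈ B, 0 < w x p →
      (2 * σ * u p + ((1 / m p) * (∑ z, w p z) - (1 / m x) * (∑ z, w x z)) * (u p - u x)
        - 2 * K * (u p - u x) = 0)
      ∧ (-2 * σ * u p + ((1 / m x) * (∑ z, w x z) - (1 / m p) * (∑ z, w p z)) * (u x - u p)
        + 4 * σ * (1 / n) * u p + 2 * K * (u p - u x) = 0) := by
    intro x hx p hp hwxp
    have hxp : x ≠ p := fun h => hx (h ▸ hp)
    have hc1 : ∀ z, w x z * w z p = 0 := hcom x hx p hp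
    have hc2 : ∀ z, w p z * w z x = 0 := by
      intro z
      rw [hsymm p z, hsymm z x, mul_comm]
      exact hc1 z
    have hwpx : 0 < w p x := by rw [hsymm p x]; exact hwxp
    have hA := hBil (dd p) x
    rw [M2 m w u hxp hc1 (hBind p hp p hp), gGam_dd m w u hxp, glap_dd m w hxp,
      hharm x hx, hglapB p hp] at hA
    have hB2 := hBil (dd x) p
    rw [M2 m w u hxp.symm hc2 (hloop x), gGam_dd m w u hxp.symm, glap_dd m w hxp.symm,
      hharm x hx, hglapB p hp] at hB2
    have hmx := hm x
    have hmp := hm p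
    constructor
    · have key : (1 / (4 * m x)) * (w x p *
          (2 * σ * u p + ((1 / m p) * (∑ z, w p z) - (1 / m x) * (∑ z, w x z)) * (u p - u x)
            - 2 * K * (u p - u x))) = 0 := by
        linear_combination hA
      have k1 := (mul_eq_zero.mp key).resolve_left (by positivity)
      exact (mul_eq_zero.mp k1).resolve_left hwxp.ne'
    · have key : (1 / (4 * m p)) * (w p x *
          (-2 * σ * u p + ((1 / m x) * (∑ z, w x z) - (1 / m p) * (∑ z, w p z)) * (u x - u p)
            + 4 * σ * (1 / n) * u p + 2 * K * (u p - u x))) = 0 := by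
        linear_combination hB2
      have k1 := (mul_eq_zero.mp key).resolve_left (by positivity)
      exact (mul_eq_zero.mp k1).resolve_left hwpx.ne'
  -- interior values of u vanish
  have hu0 : ∀ x, x ∉ B → u x = 0 := by
    intro x hx
    obtain ⟨y, hyne, hypos⟩ := exists_nbr w hsymm hconn hp₀x₀' x
    have hyB : y ∈ B := by
      by_contra h
      exact hypos.ne' (hEmpty x hx y h)
    obtain ⟨h1', h2'⟩ := hE34 x hx y hyB hypos
    have hKux : K * u x = 0 := by
      linear_combination (1 / 4) * h1' - (1 / 4) * h2' + u y * hKs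
    exact (mul_eq_zero.mp hKux).resolve_left hK.ne'
  -- boundary degree identity
  have hWp : ∀ p ∈ B, u p ≠ 0 → ∑ z, w p z = σ * m p := by
    intro p hp hup
    have h := hglapB p hp
    rw [show glap m w u p = (1 / m p) * ∑ z, (u z - u p) * w p z from rfl] at h
    have hsum : ∑ z, (u z - u p) * w p z = ∑ z, -(u p * w p z) := by
      refine Finset.sum_congr rfl fun z _ => ?_
      by_cases hz : z ∈ B
      · rw [hBind p hp z hz]; ring
      · rw [hu0 z hz]; ring
    rw [hsum, Finset.sum_neg_distrib, ← Finset.mul_sum] at h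
    have hmp1 : (1 / m p) * m p = 1 := one_div_mul_cancel (hm' p)
    have h2 : (1 / m p) * (u p * ((∑ z, w p z) - σ * m p)) = 0 := by
      linear_combination (-1 : ℝ) * h + (-(σ * u p)) * hmp1
    have k1 := (mul_eq_zero.mp h2).resolve_left (one_div_ne_zero (hm' p))
    have k2 := (mul_eq_zero.mp k1).resolve_left hup
    linarith [sub_eq_zero.mp k2]
  -- equation E2 for distinct boundary vertices
  have hE2 : ∀ p ∈ B, ∀ q ∈ B, p ≠ q →
      (u p + u q) * (∑ y, w p y * w y q * (1 / m y)) = 0 := by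
    intro p hp q hq hpq
    have h := hBil (dd q) p
    rw [M1 m w u hpq (hBind p hp q hq), gGam_dd m w u hpq, glap_dd m w hpq,
      hBind p hp q hq] at h
    have hsum : ∑ y, (w p y * w y q * (1 / m y)) * (u p + u q - 2 * u y)
        = (u p + u q) * ∑ y, w p y * w y q * (1 / m y) := by
      rw [Finset.mul_sum]
      refine Finset.sum_congr rfl fun y _ => ?_
      by_cases hy : y ∈ B
      · rw [hBind y hy q hq]; ring
      · rw [hu0 y hy]; ring
    rw [hsum] at h
    have hmp := hm p
    have h2 : (1 / (4 * m p)) * ((u p + u q) * ∑ y, w p y * w y q * (1 / m y)) = 0 := by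
      linear_combination h
    exact (mul_eq_zero.mp h2).resolve_left (by positivity)
  -- equation E1 for distinct interior vertices
  have hE1 : ∀ x, x ∉ B → ∀ z, z ∉ B → x ≠ z →
      ∑ y, (w x y * w y z * (1 / m y)) * u y = 0 := by
    intro x hx z hz hxz
    have h := hBil (dd z) x
    rw [M1 m w u hxz (hEmpty x hx z hz), gGam_dd m w u hxz, glap_dd m w hxz,
      hEmpty x hx z hz, hu0 x hx, hu0 z hz] at h
    have hsum : ∑ y, (w x y * w y z * (1 / m y)) * (0 + 0 - 2 * u y)
        = (-2) * ∑ y, (w x y * w y z * (1 / m y)) * u y := by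
      rw [Finset.mul_sum]
      exact Finset.sum_congr rfl fun y _ => by ring
    rw [hsum] at h
    have hmx := hm x
    have h2 : (1 / (4 * m x)) * ((-2) * ∑ y, (w x y * w y z * (1 / m y)) * u y) = 0 := by
      linear_combination h
    have k1 := (mul_eq_zero.mp h2).resolve_left (by positivity)
    have k2 := (mul_eq_zero.mp k1).resolve_left (by norm_num)
    exact k2
  -- positivity of the connecting sums
  have hcpos : ∀ r s x : V, 0 < w r x → 0 < w x s → 0 < ∑ y, w r y * w y s * (1 / m y) := by
    intro r s x hrx hxs
    apply Finset.sum_pos'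
    · intro y _
      have := hm y
      have h1 := hnn r y
      have h2 := hnn y s
      positivity
    · refine ⟨x, Finset.mem_univ x, ?_⟩
      have := hm x
      positivity
  -- propagation of non-vanishing along the graph
  have hprop : ∀ v : V, (v ∈ B → u v ≠ 0) ∧ (v ∉ B → ∃ b, b ∈ B ∧ 0 < w v b ∧ u b ≠ 0) := by
    intro v
    refine closure w hconn
      {v | (v ∈ B → u v ≠ 0) ∧ (v ∉ B → ∃ b, b ∈ B ∧ 0 < w v b ∧ u b ≠ 0)}
      (a := p₀) ⟨fun _ => hup₀, fun h => absurd hp₀B h⟩ ?_ v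
    intro v hv v' hadj
    obtain ⟨hne, hpos⟩ := (wgraph_adj w hsymm).mp hadj
    by_cases hvB : v ∈ B
    · have hv'B : v' ∉ B := fun h => hpos.ne' (hBind v hvB v' h)
      exact ⟨fun h => absurd h hv'B,
        fun _ => ⟨v, hvB, by rw [hsymm v' v]; exact hpos, hv.1 hvB⟩⟩
    · obtain ⟨b, hbB, hwvb, hub⟩ := hv.2 hvB
      have hv'B : v' ∈ B := by
        by_contra h
        exact hpos.ne' (hEmpty v hvB v' h)
      refine ⟨fun _ => ?_, fun h => absurd hv'B h⟩
      by_cases hbv' : v' = b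
      · rw [hbv']; exact hub
      · have hsum_pos : 0 < ∑ y, w b y * w y v' * (1 / m y) := by
          refine hcpos b v' v (by rw [hsymm b v]; exact hwvb) hpos
        have h := hE2 b hbB v' hv'B (fun h => hbv' h.symm)
        have hzero := (mul_eq_zero.mp h).resolve_right hsum_pos.ne'
        intro h0
        rw [h0, add_zero] at hzero
        exact hub hzero
  have hallB : ∀ p ∈ B, u p ≠ 0 := fun p hp => (hprop p).1 hp
  have hallΩ : ∀ x, x ∉ B → ∃ b, b ∈ B ∧ 0 < w x b ∧ u b ≠ 0 := fun x hx => (hprop x).2 hx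
  -- two boundary neighbours of a common interior vertex have opposite values
  have hOppo : ∀ x, x ∉ B → ∀ r, r ∈ B → ∀ s, s ∈ B → r ≠ s →
      0 < w x r → 0 < w x s → u s = -u r := by
    intro x hx r hrB s hsB hrs hwxr hwxs
    have h := hE2 r hrB s hsB hrs
    have hpos : 0 < ∑ y, w r y * w y s * (1 / m y) :=
      hcpos r s x (by rw [hsymm r x]; exact hwxr) hwxs
    have := (mul_eq_zero.mp h).resolve_right hpos.ne'
    linarith
  -- interior vertices have exactly two boundary neighbours with equal weights
  have hNbr : ∀ x, x ∉ B → ∃ b c : V, b ∈ B ∧ c ∈ B ∧ b ≠ c ∧ 0 < w x b ∧ 0 < w x c ∧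
      u c = -u b ∧ (∀ y, y ≠ b → y ≠ c → w x y = 0) ∧ w x b = w x c := by
    intro x hx
    obtain ⟨b, hbB, hwxb, hub⟩ := hallΩ x hx
    have hharm2 : ∑ z, u z * w x z = 0 := by
      have h := hharm x hx
      rw [show glap m w u x = (1 / m x) * ∑ z, (u z - u x) * w x z from rfl] at h
      have h2 : ∑ z, (u z - u x) * w x z = ∑ z, u z * w x z := by
        refine Finset.sum_congr rfl fun z _ => ?_
        rw [hu0 x hx]; ring
      rw [h2] at h
      exact (mul_eq_zero.mp h).resolve_left (one_div_ne_zero (hm' x))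
    have hc : ∃ c, c ≠ b ∧ 0 < w x c := by
      by_contra hno
      push_neg at hno
      have hs : ∑ z, u z * w x z = u b * w x b := by
        apply Finset.sum_eq_single b
        · intro z _ hz
          have h1 : w x z = 0 := le_antisymm (hno z hz) (hnn x z)
          rw [h1]; ring
        · intro h
          exact absurd (Finset.mem_univ b) h
      rw [hs] at hharm2
      exact (mul_ne_zero hub hwxb.ne') hharm2
    obtain ⟨c, hcb, hwxc⟩ := hc
    have hcB : c ∈ B := by
      by_contra h
      exact hwxc.ne' (hEmpty x hx c h)
    have hbc : b ≠ c := Ne.symm hcb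
    have hucb : u c = -u b := hOppo x hx b hbB c hcB hbc hwxb hwxc
    have hsupp : ∀ y, y ≠ b → y ≠ c → w x y = 0 := by
      intro y hyb hyc
      by_contra h
      have hwxy : 0 < w x y := lt_of_le_of_ne (hnn x y) (Ne.symm h)
      have hyB : y ∈ B := by
        by_contra h'
        exact hwxy.ne' (hEmpty x hx y h')
      have h1 : u y = -u b := hOppo x hx b hbB y hyB (Ne.symm hyb) hwxb hwxy
      have h2 : u y = -u c := hOppo x hx c hcB y hyB (Ne.symm hyc) hwxc hwxy
      exact hub (by linarith)
    have hpair : ∑ z, u z * w x z = u b * w x b + u c * w x c := by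
      rw [sum_pair_support (fun z => u z * w x z) hbc
        (fun y h1 h2 => by show u y * w x y = 0; rw [hsupp y h1 h2]; ring)]
    have hweq : w x b = w x c := by
      have h3 : u b * (w x b - w x c) = 0 := by
        rw [hpair] at hharm2
        linear_combination hharm2 + (-(w x c)) * hucb
      have := (mul_eq_zero.mp h3).resolve_left hub
      linarith [sub_eq_zero.mp this]
    exact ⟨b, c, hbB, hcB, hbc, hwxb, hwxc, hucb, hsupp, hweq⟩
  -- fix an interior vertex and its two boundary neighbours
  obtain ⟨P, Q, hPB, hQB, hPQ, hwx₀P, hwx₀Q, hux₀PQ, hsupp₀, hweq₀⟩ := hNbr x₀' hx₀'B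
  -- extension step: any interior vertex adjacent to P (resp. Q) has neighbours exactly {P,Q}
  have hextend : ∀ R S' v' : V, R ∈ B → S' ∈ B → R ≠ S' → v' ∉ B → 0 < w v' R →
      0 < w x₀' R → 0 < w x₀' S' → (∀ y, y ≠ R → y ≠ S' → w x₀' y = 0) →
      (0 < w v' S' ∧ ∀ y, y ≠ R → y ≠ S' → w v' y = 0) := by
    intro R S' v' hRB hS'B hRS hv'B hwv'R hx₀R hx₀S' hsuppl
    obtain ⟨b, c, hbB, hcB, hbc, hwb, hwc, hucb', hsupp', hweq'⟩ := hNbr v' hv'B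
    have key : ∀ b c : V, b ≠ c → 0 < w v' b → 0 < w v' c →
        (∀ y, y ≠ b → y ≠ c → w v' y = 0) → R = b → c = S' := by
      intro b c hbc hwb hwc hsupp' hRb
      subst hRb
      by_cases hv'x₀ : v' = x₀'
      · subst hv'x₀
        by_contra hcS'
        exact hwc.ne' (hsuppl c (Ne.symm hbc) hcS')
      · by_contra hcS'
        have h := hE1 x₀' hx₀'B v' hv'B (fun h => hv'x₀ h.symm)
        have hsingle : ∑ y, w x₀' y * w y v' * (1 / m y) * u y
            = w x₀' R * w R v' * (1 / m R) * u R := by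
          apply Finset.sum_eq_single R
          · intro y _ hyR
            by_cases hyS : y = S'
            · subst hyS
              have h0 : w v' y = 0 := hsupp' y (Ne.symm hRS) (fun h => hcS' h.symm)
              rw [hsymm y v', h0]
              ring
            · rw [hsuppl y hyR hyS]; ring
          · intro h
            exact absurd (Finset.mem_univ R) h
        rw [hsingle] at h
        have h1 : (0:ℝ) < w x₀' R := hx₀R
        have h2 : (0:ℝ) < w R v' := by rw [hsymm R v']; exact hwv'R
        have h3 : u R ≠ 0 := hallB R hRB
        have h4 := hm R
        exact (mul_ne_zero (by positivity) h3) h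
    have hRbc : R = b ∨ R = c := by
      by_contra h
      push_neg at h
      exact hwv'R.ne' (hsupp' R h.1 h.2)
    rcases hRbc with hRb | hRc
    · have hcS' : c = S' := key b c hbc hwb hwc hsupp' hRb
      subst hRb; subst hcS'
      exact ⟨hwc, hsupp'⟩
    · have hbS' : b = S' := key c b (Ne.symm hbc) hwc hwb
        (fun y h1 h2 => hsupp' y h2 h1) hRc
      subst hRc; subst hbS'
      exact ⟨hwb, fun y h1 h2 => hsupp' y h2 h1⟩
  -- the closure set
  have hTall : ∀ v : V, v = P ∨ v = Q ∨
      (v ∉ B ∧ 0 < w v P ∧ 0 < w v Q ∧ ∀ y, y ≠ P → y ≠ Q → w v y = 0) := by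
    refine closure w hconn
      {v | v = P ∨ v = Q ∨
        (v ∉ B ∧ 0 < w v P ∧ 0 < w v Q ∧ ∀ y, y ≠ P → y ≠ Q → w v y = 0)}
      (a := x₀') (Or.inr (Or.inr ⟨hx₀'B, hwx₀P, hwx₀Q, hsupp₀⟩)) ?_
    intro v hv v' hadj
    obtain ⟨hne, hpos⟩ := (wgraph_adj w hsymm).mp hadj
    rcases hv with hvP | hvQ | ⟨hvB, hvP, hvQ, hvsupp⟩
    · have hposP : 0 < w P v' := by rw [← hvP]; exact hpos
      have hv'B : v' ∉ B := fun h => hposP.ne' (hBind P hPB v' h)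
      have hwv'P : 0 < w v' P := by rw [hsymm v' P]; exact hposP
      have hres := hextend P Q v' hPB hQB hPQ hv'B hwv'P hwx₀P hwx₀Q hsupp₀
      exact Or.inr (Or.inr ⟨hv'B, hwv'P, hres.1, hres.2⟩)
    · have hposQ : 0 < w Q v' := by rw [← hvQ]; exact hpos
      have hv'B : v' ∉ B := fun h => hposQ.ne' (hBind Q hQB v' h)
      have hwv'Q : 0 < w v' Q := by rw [hsymm v' Q]; exact hposQ
      have hres := hextend Q P v' hQB hPB (Ne.symm hPQ) hv'B hwv'Q hwx₀Q hwx₀P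
        (fun y h1 h2 => hsupp₀ y h2 h1)
      exact Or.inr (Or.inr ⟨hv'B, hres.1, hwv'Q, fun y h1 h2 => hres.2 y h2 h1⟩)
    · by_cases h1 : v' = P
      · exact Or.inl h1
      · by_cases h2 : v' = Q
        · exact Or.inr (Or.inl h2)
        · exact absurd (hvsupp v' h1 h2) hpos.ne'
  -- B = {P, Q}
  have hBPQ : B = {P, Q} := by
    ext b
    simp only [Finset.mem_insert, Finset.mem_singleton]
    constructor
    · intro hb
      rcases hTall b with h | h | h
      · exact Or.inl h
      · exact Or.inr h
      · exact absurd hb h.1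
    · rintro (rfl | rfl)
      · exact hPB
      · exact hQB
  -- equal weights towards P and Q for any interior vertex
  have hwPQeq : ∀ x, x ∉ B → w x P = w x Q := by
    intro x hx
    obtain ⟨b, c, hbB, hcB, hbc, hwb, hwc, _, hsupp', hweq'⟩ := hNbr x hx
    have hb' : b = P ∨ b = Q := by
      have := hbB; rw [hBPQ] at this; simpa using this
    have hc' : c = P ∨ c = Q := by
      have := hcB; rw [hBPQ] at this; simpa using this
    rcases hb' with rfl | rfl <;> rcases hc' with rfl | rfl
    · exact absurd rfl hbc
    · exact hweq'
    · exact hweq'.symm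
    · exact absurd rfl hbc
  -- interior degree identity
  have hdeg : ∀ x, x ∉ B → ∀ p ∈ B, 0 < w x p →
      ∑ z, w x z = (3 * σ - 2 * K) * m x := by
    intro x hx p hp hwxp
    have h1 := (hE34 x hx p hp hwxp).1
    rw [hu0 x hx] at h1
    have hup := hallB p hp
    have key : u p * (2 * σ + (1 / m p) * (∑ z, w p z) - (1 / m x) * (∑ z, w x z)
        - 2 * K) = 0 := by linear_combination h1
    have hE0 := (mul_eq_zero.mp key).resolve_left hup
    rw [hWp p hp hup] at hE0
    have hmp1 : (1 / m p) * m p = 1 := one_div_mul_cancel (hm' p)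
    have hmx1 : (1 / m x) * m x = 1 := one_div_mul_cancel (hm' x)
    linear_combination (-(m x)) * hE0 + (σ * m x) * hmp1 + (-(∑ z, w x z)) * hmx1
  -- the CD contradiction for two distinct interior vertices
  have hpaircontra : ∀ x z, x ∉ B → z ∉ B → x ≠ z →
      0 < w x P → 0 < w x Q → (∀ y, y ≠ P → y ≠ Q → w x y = 0) →
      0 < w z P → w x P ≤ w z P → False := by
    intro x z hx hz hxz' hwxP hwxQ hsx hwzP hab
    have hwxz0 : w x z = 0 := hEmpty x hx z hz
    have e1 := M3 m w (hloop x)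
    have e2 := gGam2_dd_dd_cross m w hxz' hwxz0 (hloop x)
    have e3 := gGam2_dd_dd_nonadj m w hxz' hwxz0 (hloop z)
    have e4 := glap_dd_self m w x (hloop x)
    have e5 : glap m w (dd z) x = 0 := by rw [glap_dd m w hxz', hwxz0]; ring
    have e6 := gGam_dd_dd_self m w (hloop x)
    have e7 : gGam m w (dd x) (dd z) x = 0 := by
      rw [gGam_dd m w (dd x) hxz', hwxz0]; ring
    have e8 : gGam m w (dd z) (dd z) x = 0 := by
      rw [gGam_dd m w (dd z) hxz', hwxz0]; ring
    have hexp := Q_expand m w K n (dd x) (dd z) (-1) x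
    rw [e1, e2, e3, e4, e5, e6, e7, e8] at hexp
    have hcd := hCD (fun v => dd x v + (-1) * dd z v) x
    have hQ0 : (0:ℝ) ≤ (3 / (4 * m x) * (∑ y, w x y * w y x * (1 / m y))
          + (1 / m x * ∑ y, w x y) ^ 2 / 4
        - 1 / n * (-(1 / m x * ∑ y, w x y)) ^ 2 - K * (1 / (2 * m x) * ∑ y, w x y))
        + 2 * (-1) * (1 / (4 * m x) * (∑ y, w x y * w y z * (1 / m y))
          - 1 / n * (-(1 / m x * ∑ y, w x y) * 0) - K * 0)
        + (-1) ^ 2 * (1 / (4 * m x) * (∑ y, w x y * w y z * (1 / m y))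
          - 1 / n * 0 ^ 2 - K * 0) := by
      rw [← hexp]
      linarith [hcd]
    -- evaluate the sums
    have hWx : ∑ y, w x y = w x P + w x Q :=
      sum_pair_support (fun y => w x y) hPQ hsx
    have hSS : ∑ y, w x y * w y x * (1 / m y)
        = w x P * w P x * (1 / m P) + w x Q * w Q x * (1 / m Q) :=
      sum_pair_support (fun y => w x y * w y x * (1 / m y)) hPQ
        (fun y h1 h2 => by show w x y * w y x * (1 / m y) = 0; rw [hsx y h1 h2]; ring)
    have hST : ∑ y, w x y * w y z * (1 / m y)
        = w x P * w P z * (1 / m P) + w x Q * w Q z * (1 / m Q) :=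
      sum_pair_support (fun y => w x y * w y z * (1 / m y)) hPQ
        (fun y h1 h2 => by show w x y * w y z * (1 / m y) = 0; rw [hsx y h1 h2]; ring)
    rw [hWx, hSS, hST, hsymm P x, hsymm Q x, hsymm P z, hsymm Q z] at hQ0
    have hxPQ : w x P = w x Q := hwPQeq x hx
    have hzPQ : w z P = w z Q := hwPQeq z hz
    rw [← hxPQ, ← hzPQ] at hQ0
    have hmx := hm x
    have hmP := hm P
    have hmQ := hm Q
    have hMpos : (0:ℝ) < 8 * n * (m x) ^ 2 * (m P) * (m Q) := by positivity
    have hPoly : (0:ℝ) ≤ 2 * n * (m x) * (w x P) * ((m P) * (3 * w x P - w z P))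
        + 2 * n * (m x) * (w x P) * ((m Q) * (3 * w x P - w z P))
        + 8 * n * (w x P) ^ 2 * (m P) * (m Q) - 32 * (w x P) ^ 2 * (m P) * (m Q)
        - 8 * n * K * (w x P) * (m x) * (m P) * (m Q) := by
      have heq : 8 * n * (m x) ^ 2 * (m P) * (m Q) *
          (3 / (4 * m x) * (w x P * w x P * (1 / m P) + w x P * w x P * (1 / m Q))
            + (1 / m x * (w x P + w x P)) ^ 2 / 4
            - 1 / n * (-(1 / m x * (w x P + w x P))) ^ 2
            - K * (1 / (2 * m x) * (w x P + w x P))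
            + 2 * -1 * (1 / (4 * m x) * (w x P * w z P * (1 / m P)
                + w x P * w z P * (1 / m Q))
              - 1 / n * (-(1 / m x * (w x P + w x P)) * 0) - K * 0)
            + (-1) ^ 2 * (1 / (4 * m x) * (w x P * w z P * (1 / m P)
                + w x P * w z P * (1 / m Q)) - 1 / n * 0 ^ 2 - K * 0))
          = 2 * n * (m x) * (w x P) * ((m P) * (3 * w x P - w z P))
            + 2 * n * (m x) * (w x P) * ((m Q) * (3 * w x P - w z P))
            + 8 * n * (w x P) ^ 2 * (m P) * (m Q) - 32 * (w x P) ^ 2 * (m P) * (m Q)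
            - 8 * n * K * (w x P) * (m x) * (m P) * (m Q) := by
        field_simp
        ring
      rw [← heq]
      exact mul_nonneg hMpos.le hQ0
    -- degree and mass constraints
    have hdx := hdeg x hx P hPB hwxP
    rw [hWx, ← hxPQ] at hdx
    have hWPm := hWp P hPB (hallB P hPB)
    have hWQm := hWp Q hQB (hallB Q hQB)
    have hPb : w x P + w z P ≤ σ * m P := by
      have hsub : ∑ y ∈ ({x, z} : Finset V), w P y ≤ ∑ y, w P y :=
        Finset.sum_le_sum_of_subset_of_nonneg (Finset.subset_univ _)
          (fun i _ _ => hnn P i)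
      rw [Finset.sum_pair hxz', hWPm, hsymm P x, hsymm P z] at hsub
      exact hsub
    have hQb : w x P + w z P ≤ σ * m Q := by
      have hsub : ∑ y ∈ ({x, z} : Finset V), w Q y ≤ ∑ y, w Q y :=
        Finset.sum_le_sum_of_subset_of_nonneg (Finset.subset_univ _)
          (fun i _ _ => hnn Q i)
      rw [Finset.sum_pair hxz', hWQm, hsymm Q x, hsymm Q z] at hsub
      rw [← hxPQ, ← hzPQ] at hsub
      exact hsub
    clear hexp hcd hQ0 e1 e2 e3 e4 e5 e6 e7 e8 hBil hQu hE34 hE2 hE1 hcpos hprop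
    clear hOppo hNbr hextend hTall hcom hglapB heig hharm hWx hSS hST hWp hdeg
    have i1 : 3 * w x P - w z P ≤ σ * m Q := by linarith [hQb, hab]
    have i2 : 3 * w x P - w z P ≤ σ * m P := by linarith [hPb, hab]
    have hkey : (n * σ * (m x) + 2 * (w x P) * (n - 4) - 2 * n * K * (m x)) * (n - 1)
        = -8 * K * (m x) := by
      linear_combination ((n - 4) * (n - 1)) * hdx
        + (n * (m x) + 3 * (n - 4) * (m x)) * hσrel
    have hneg : n * σ * (m x) + 2 * (w x P) * (n - 4) - 2 * n * K * (m x) < 0 := by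
      nlinarith [hkey, hn1, hK, hm x]
    have hApos : 0 < w x P := hwxP
    have j1 : 2 * n * (m x) * (w x P) * ((m P) * (3 * w x P - w z P))
        ≤ 2 * n * (m x) * (w x P) * ((m P) * (σ * m Q)) := by
      apply mul_le_mul_of_nonneg_left _ (by positivity)
      exact mul_le_mul_of_nonneg_left i1 hmP.le
    have j2 : 2 * n * (m x) * (w x P) * ((m Q) * (3 * w x P - w z P))
        ≤ 2 * n * (m x) * (w x P) * ((m Q) * (σ * m P)) := by
      apply mul_le_mul_of_nonneg_left _ (by positivity)
      exact mul_le_mul_of_nonneg_left i2 hmQ.le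
    have j3 : (4 * (w x P) * (m P) * (m Q))
        * (n * σ * (m x) + 2 * (w x P) * (n - 4) - 2 * n * K * (m x)) < 0 :=
      mul_neg_of_pos_of_neg (by positivity) hneg
    nlinarith [hPoly, j1, j2, j3]
  -- uniqueness of the interior vertex
  have hΩuniq : ∀ x z : V, x ∉ B → z ∉ B → x = z := by
    intro x z hx hz
    by_contra hxz
    rcases hTall x with h | h | ⟨_, hwxP, hwxQ, hsx⟩
    · exact hx (h ▸ hPB)
    · exact hx (h ▸ hQB)
    rcases hTall z with h | h | ⟨_, hwzP, hwzQ, hsz⟩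
    · exact hz (h ▸ hPB)
    · exact hz (h ▸ hQB)
    rcases le_total (w x P) (w z P) with hle | hle
    · exact hpaircontra x z hx hz hxz hwxP hwxQ hsx hwzP hle
    · exact hpaircontra z x hz hx (Ne.symm hxz) hwzP hwzQ hsz hwxP hle
  -- cardinalities
  have hcard1 : Bᶜ.card = 1 := by
    rw [Finset.card_eq_one]
    refine ⟨x₀', ?_⟩
    ext v
    simp only [Finset.mem_singleton, Finset.mem_compl]
    constructor
    · intro hv; exact hΩuniq v x₀' hv hx₀'B
    · intro hv; rw [hv]; exact hx₀'B
  have hcardB : B.card = 2 := by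
    rw [hBPQ, Finset.card_insert_of_notMem (by simp [hPQ]), Finset.card_singleton]
  have hcardV : Fintype.card V = 3 := by
    have h := Finset.card_add_card_compl B
    rw [hcardB, hcard1] at h
    omega
  -- the support of each boundary vertex is exactly the interior vertex
  have hWPx : ∑ z, w P z = w P x₀' := by
    apply Finset.sum_eq_single x₀'
    · intro z _ hzx
      by_cases hzB : z ∈ B
      · exact hBind P hPB z hzB
      · exact absurd (hΩuniq z x₀' hzB hx₀'B) hzx
    · intro h; exact absurd (Finset.mem_univ _) h
  have hWQx : ∑ z, w Q z = w Q x₀' := by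
    apply Finset.sum_eq_single x₀'
    · intro z _ hzx
      by_cases hzB : z ∈ B
      · exact hBind Q hQB z hzB
      · exact absurd (hΩuniq z x₀' hzB hx₀'B) hzx
    · intro h; exact absurd (Finset.mem_univ _) h
  have hWPm := hWp P hPB (hallB P hPB)
  have hWQm := hWp Q hQB (hallB Q hQB)
  have hwPx : w P x₀' = σ * m P := by rw [← hWPx]; exact hWPm
  have hwQx : w Q x₀' = σ * m Q := by rw [← hWQx]; exact hWQm
  have hmPQ : m P = m Q := by
    have h1 : w P x₀' = w Q x₀' := by
      rw [hsymm P x₀', hsymm Q x₀']; exact hweq₀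
    rw [hwPx, hwQx] at h1
    exact mul_left_cancel₀ hσpos.ne' h1
  -- interior mass
  have hdx := hdeg x₀' hx₀'B P hPB hwx₀P
  have hWx0 : ∑ z, w x₀' z = w x₀' P + w x₀' Q :=
    sum_pair_support (fun y => w x₀' y) hPQ hsupp₀
  rw [hWx0] at hdx
  have hxP : w x₀' P = σ * m P := by rw [hsymm x₀' P]; exact hwPx
  have hxQ : w x₀' Q = σ * m Q := by rw [hsymm x₀' Q]; exact hwQx
  have h2 : (3 * σ - 2 * K) * m x₀' = 2 * (σ * m P) := by
    rw [← hdx, hxP, hxQ, ← hmPQ]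
    ring
  refine ⟨hcardV, hcard1, P, Q, x₀', hPQ, hBPQ, hx₀'B, hmPQ, ?_, ?_, ?_⟩
  · rw [hwPx, hσdef]; ring
  · rw [hwQx, ← hmPQ, hσdef]; ring
  · have hn2 : (0:ℝ) < n + 2 := by linarith
    rw [eq_div_iff hn2.ne']
    have hKform : K * ((n + 2) * m x₀') = K * (2 * n * m P) := by
      linear_combination (n - 1) * h2 + (-3 * m x₀' + 2 * m P) * hσrel
    have := mul_left_cancel₀ hK.ne' hKform
    linarith
end
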